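/- Let ℓ ≥ 1, let γ > 0, let θ be a Borel probability measure on the unit sphere S^{ℓ−1} ⊆ ℝ^ℓ, let μ = γ·(λ ⊗ θ) where λ is Lebesgue measure on ℝ, and define L(a,b) = min{ μ(Ĝ_i(a,b)) : i = 1,…,2ℓ } for 0 < a < b. Then for every r > 1: L(r·a, r·b) = r·L(a,b) and L(a, r·b) ≥ r·L(a,b). -/

import Mathlib

open MeasureTheory Set
open scoped NNReal ENNReal

noncomputable section

/-- The hyperplane `H(α,u) = {x : ⟨x,u⟩ = α}` in `ℝ^ℓ`. -/
def Hplane (ℓ : ℕ) (α : ℝ) (u : EuclideanSpace ℝ (Fin ℓ)) : Set (EuclideanSpace ℝ (Fin ℓ)) :=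
  {x | (inner ℝ x u : ℝ) = α}

/-- The closed half-space `H⁻(α,u) = {x : ⟨x,u⟩ ≤ α}`. -/
def Hminus (ℓ : ℕ) (α : ℝ) (u : EuclideanSpace ℝ (Fin ℓ)) : Set (EuclideanSpace ℝ (Fin ℓ)) :=
  {x | (inner ℝ x u : ℝ) ≤ α}

/-- The closed half-space `H⁺(α,u) = {x : ⟨x,u⟩ ≥ α}`. -/
def Hplus (ℓ : ℕ) (α : ℝ) (u : EuclideanSpace ℝ (Fin ℓ)) : Set (EuclideanSpace ℝ (Fin ℓ)) :=
  {x | α ≤ (inner ℝ x u : ℝ)}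

/-- The hyperplane `H(α,u)` separates the sets `A` and `B`. -/
def Separates {ℓ : ℕ} (A B : Set (EuclideanSpace ℝ (Fin ℓ))) (α : ℝ)
    (u : EuclideanSpace ℝ (Fin ℓ)) : Prop :=
  (A ⊆ Hplus ℓ α u ∧ B ⊆ Hminus ℓ α u) ∨ (A ⊆ Hminus ℓ α u ∧ B ⊆ Hplus ℓ α u)

/-- The facet `f_i(c) = {x : x_i = c, |x_j| ≤ c for j ≠ i}` of the cube `[−c,c]^ℓ`. -/
def facetBase (ℓ : ℕ) (i : Fin ℓ) (c : ℝ) : Set (EuclideanSpace ℝ (Fin ℓ)) :=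
  {x | x i = c ∧ ∀ j, j ≠ i → |x j| ≤ c}

/-- The `2ℓ` facets of the cube `[−c,c]^ℓ`, indexed by `Fin ℓ ⊕ Fin ℓ`:
`Sum.inl i` is `f_i(c)` and `Sum.inr i` is `f_{i+ℓ}(c) = −f_i(c)`. -/
def facet (ℓ : ℕ) (i : Fin ℓ ⊕ Fin ℓ) (c : ℝ) : Set (EuclideanSpace ℝ (Fin ℓ)) :=
  match i with
  | Sum.inl i => facetBase ℓ i c
  | Sum.inr i => (fun x => -x) '' facetBase ℓ i c

/-- The unit sphere `S^{ℓ−1}` in `ℝ^ℓ`. -/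
abbrev unitSphere (ℓ : ℕ) : Set (EuclideanSpace ℝ (Fin ℓ)) :=
  Metric.sphere (0 : EuclideanSpace ℝ (Fin ℓ)) 1

/-- `Ĝ_i(a,b)`: the set of parameters `(α,u) ∈ [0,∞) × S^{ℓ−1}` such that `H(α,u)`
separates `f_i(a)` and `f_i(b)`. -/
def Ghat (ℓ : ℕ) (i : Fin ℓ ⊕ Fin ℓ) (a b : ℝ) : Set (ℝ × unitSphere ℓ) :=
  {p | 0 ≤ p.1 ∧ Separates (facet ℓ i a) (facet ℓ i b) p.1 (p.2 : EuclideanSpace ℝ (Fin ℓ))}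

/-- The hyperplane measure `μ = γ·(λ ⊗ θ)` on `ℝ × S^{ℓ−1}`. -/
def hypMeasure (ℓ : ℕ) (γ : ℝ) (θ : Measure (unitSphere ℓ)) : Measure (ℝ × unitSphere ℓ) :=
  ENNReal.ofReal γ • ((volume : Measure ℝ).prod θ)


/-- `L(a,b) = min { μ(Ĝ_i(a,b)) : i = 1,…,2ℓ }`. -/
def Lmin (ℓ : ℕ) (γ : ℝ) (θ : Measure (unitSphere ℓ)) (a b : ℝ) : ENNReal :=
  ⨅ i : Fin ℓ ⊕ Fin ℓ, hypMeasure ℓ γ θ (Ghat ℓ i a b)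

lemma facetBase_smul (ℓ : ℕ) (i : Fin ℓ) {r : ℝ} (hr : 0 < r) (c : ℝ) :
    facetBase ℓ i (r * c) = (fun x : EuclideanSpace ℝ (Fin ℓ) => r • x) '' facetBase ℓ i c := by
  ext x
  constructor
  · rintro ⟨hxi, hxj⟩
    refine ⟨r⁻¹ • x, ⟨?_, fun j hj => ?_⟩, ?_⟩
    · simp only [PiLp.smul_apply, smul_eq_mul, hxi]
      field_simp
    · have := hxj j hj
      simp only [PiLp.smul_apply, smul_eq_mul, abs_mul, abs_inv, abs_of_pos hr]
      rw [inv_mul_le_iff₀ hr] at *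
      linarith [this]
    · simp [smul_smul, mul_inv_cancel₀ hr.ne']
  · rintro ⟨y, ⟨hyi, hyj⟩, rfl⟩
    refine ⟨?_, fun j hj => ?_⟩
    · simp [PiLp.smul_apply, hyi]
    · have := hyj j hj
      simp only [PiLp.smul_apply, smul_eq_mul, abs_mul, abs_of_pos hr]
      exact mul_le_mul_of_nonneg_left this hr.le

lemma facet_smul (ℓ : ℕ) (i : Fin ℓ ⊕ Fin ℓ) {r : ℝ} (hr : 0 < r) (c : ℝ) :
    facet ℓ i (r * c) = (fun x : EuclideanSpace ℝ (Fin ℓ) => r • x) '' facet ℓ i c := by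
  cases i with
  | inl i => exact facetBase_smul ℓ i hr c
  | inr i =>
    show (fun x => -x) '' facetBase ℓ i (r * c)
        = (fun x : EuclideanSpace ℝ (Fin ℓ) => r • x) '' ((fun x => -x) '' facetBase ℓ i c)
    rw [facetBase_smul ℓ i hr c, image_image, image_image]
    simp [smul_neg]

lemma smul_subset_Hplus {ℓ : ℕ} {A : Set (EuclideanSpace ℝ (Fin ℓ))} {α r : ℝ} (hr : 0 < r)
    (u : EuclideanSpace ℝ (Fin ℓ)) :
    (fun x : EuclideanSpace ℝ (Fin ℓ) => r • x) '' A ⊆ Hplus ℓ α u ↔ A ⊆ Hplus ℓ (α / r) u := by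
  rw [image_subset_iff]
  refine forall₂_congr fun x _ => ?_
  show α ≤ (inner ℝ (r • x) u : ℝ) ↔ α / r ≤ (inner ℝ x u : ℝ)
  rw [real_inner_smul_left, div_le_iff₀' hr]

lemma smul_subset_Hminus {ℓ : ℕ} {A : Set (EuclideanSpace ℝ (Fin ℓ))} {α r : ℝ} (hr : 0 < r)
    (u : EuclideanSpace ℝ (Fin ℓ)) :
    (fun x : EuclideanSpace ℝ (Fin ℓ) => r • x) '' A ⊆ Hminus ℓ α u ↔ A ⊆ Hminus ℓ (α / r) u := by
  rw [image_subset_iff]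
  refine forall₂_congr fun x _ => ?_
  show (inner ℝ (r • x) u : ℝ) ≤ α ↔ (inner ℝ x u : ℝ) ≤ α / r
  rw [real_inner_smul_left, le_div_iff₀' hr]

lemma separates_smul {ℓ : ℕ} {A B : Set (EuclideanSpace ℝ (Fin ℓ))} {α r : ℝ} (hr : 0 < r)
    (u : EuclideanSpace ℝ (Fin ℓ)) :
    Separates ((fun x : EuclideanSpace ℝ (Fin ℓ) => r • x) '' A)
      ((fun x : EuclideanSpace ℝ (Fin ℓ) => r • x) '' B) α u ↔ Separates A B (α / r) u := by
  unfold Separates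
  rw [smul_subset_Hplus hr, smul_subset_Hminus hr, smul_subset_Hplus hr, smul_subset_Hminus hr]

lemma Ghat_preimage (ℓ : ℕ) (i : Fin ℓ ⊕ Fin ℓ) {r : ℝ} (hr : 0 < r) (a b : ℝ) :
    Ghat ℓ i (r * a) (r * b) =
      (fun p : ℝ × unitSphere ℓ => (r⁻¹ * p.1, p.2)) ⁻¹' Ghat ℓ i a b := by
  ext ⟨α, u⟩
  show (0 ≤ α ∧ _) ↔ (0 ≤ r⁻¹ * α ∧ _)
  rw [facet_smul ℓ i hr a, facet_smul ℓ i hr b, separates_smul hr]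
  constructor
  · rintro ⟨h0, hsep⟩
    exact ⟨mul_nonneg (inv_pos.mpr hr).le h0, by rwa [div_eq_inv_mul] at hsep⟩
  · rintro ⟨h0, hsep⟩
    refine ⟨nonneg_of_mul_nonneg_right ?_ (inv_pos.mpr hr), by rwa [div_eq_inv_mul]⟩
    exact h0

lemma smul_prod_meas {α β : Type*} [MeasurableSpace α] [MeasurableSpace β] (c : ℝ≥0)
    (μ : Measure α) (ν : Measure β) [SigmaFinite μ] [SigmaFinite ν] :
    ((c : ℝ≥0∞) • μ).prod ν = (c : ℝ≥0∞) • (μ.prod ν) := by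
  haveI : SigmaFinite ((c : ℝ≥0∞) • μ) := SMul.sigmaFinite (μ := μ) c
  refine Measure.prod_eq fun s t hs ht => ?_
  simp [Measure.prod_prod, mul_assoc]
  rfl

lemma hypMeasure_scale (ℓ : ℕ) (γ : ℝ) (θ : Measure (unitSphere ℓ)) [IsProbabilityMeasure θ]
    {r : ℝ} (hr : 0 < r) (G : Set (ℝ × unitSphere ℓ)) :
    hypMeasure ℓ γ θ ((fun p : ℝ × unitSphere ℓ => (r⁻¹ * p.1, p.2)) ⁻¹' G) =
      ENNReal.ofReal r * hypMeasure ℓ γ θ G := by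
  set e : ℝ × unitSphere ℓ ≃ᵐ ℝ × unitSphere ℓ :=
    ((Homeomorph.mulLeft₀ (r⁻¹) (inv_ne_zero hr.ne')).toMeasurableEquiv).prodCongr
      (MeasurableEquiv.refl _) with he
  have hpre : (fun p : ℝ × unitSphere ℓ => (r⁻¹ * p.1, p.2)) ⁻¹' G = e ⁻¹' G := rfl
  have hmap : ((volume : Measure ℝ).prod θ).map e = ENNReal.ofReal r • ((volume : Measure ℝ).prod θ) := by
    have : (e : ℝ × unitSphere ℓ → ℝ × unitSphere ℓ) = Prod.map (fun x => r⁻¹ * x) id := rfl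
    rw [this, ← Measure.map_prod_map _ _ (measurable_const_mul r⁻¹) measurable_id,
      Measure.map_id, Real.map_volume_mul_left (inv_ne_zero hr.ne'), inv_inv,
      abs_of_pos hr]
    exact smul_prod_meas r.toNNReal _ _
  calc hypMeasure ℓ γ θ (e ⁻¹' G)
      = ENNReal.ofReal γ * ((volume : Measure ℝ).prod θ) (e ⁻¹' G) := rfl
    _ = ENNReal.ofReal γ * (((volume : Measure ℝ).prod θ).map e) G := by
        rw [MeasurableEquiv.map_apply]
    _ = ENNReal.ofReal r * hypMeasure ℓ γ θ G := by
        rw [hmap]; simp [hypMeasure]; ring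


lemma Ghat_mono_subset (ℓ : ℕ) (i : Fin ℓ ⊕ Fin ℓ) {a b r : ℝ} (ha : 0 < a) (hab : a < b)
    (hr : 1 < r) : Ghat ℓ i (r * a) (r * b) ⊆ Ghat ℓ i a (r * b) := by
  rintro ⟨α, u⟩ ⟨hα, hsep⟩
  refine ⟨hα, ?_⟩
  have hr0 : 0 < r := lt_trans one_pos hr
  have hfa : facet ℓ i (r * a) = (fun x : EuclideanSpace ℝ (Fin ℓ) => r • x) '' facet ℓ i a :=
    facet_smul ℓ i hr0 a
  have hba : 0 < b / a := div_pos (lt_trans ha hab) ha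
  have hfb : facet ℓ i (r * b)
      = (fun x : EuclideanSpace ℝ (Fin ℓ) => (b / a) • x) '' facet ℓ i (r * a) := by
    have : (b / a) * (r * a) = r * b := by field_simp
    rw [← this, facet_smul ℓ i hba (r * a)]
  rcases hsep with ⟨hA, hB⟩ | ⟨hA, hB⟩
  · -- facet (r*a) ⊆ Hplus, facet (r*b) ⊆ Hminus
    left
    refine ⟨fun x hx => ?_, hB⟩
    have hx1 : (r • x : EuclideanSpace ℝ (Fin ℓ)) ∈ facet ℓ i (r * a) := by
      rw [hfa]; exact ⟨x, hx, rfl⟩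
    have h1 : α ≤ (inner ℝ (r • x : EuclideanSpace ℝ (Fin ℓ)) u : ℝ) := hA hx1
    have hx2 : ((b / a) • (r • x) : EuclideanSpace ℝ (Fin ℓ)) ∈ facet ℓ i (r * b) := by
      rw [hfb]; exact ⟨r • x, hx1, rfl⟩
    have h2 : (inner ℝ ((b / a) • (r • x) : EuclideanSpace ℝ (Fin ℓ)) u : ℝ) ≤ α := hB hx2
    rw [real_inner_smul_left] at h1 h2
    rw [real_inner_smul_left] at h2
    show α ≤ (inner ℝ x u : ℝ)
    set s := (inner ℝ x u : ℝ)
    have h2' : b * (r * s) ≤ a * α := by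
      have := mul_le_mul_of_nonneg_left h2 ha.le
      calc b * (r * s) = a * (b / a * (r * s)) := by field_simp
        _ ≤ a * α := this
    have ht : r * s ≤ 0 := by nlinarith
    have ht0 : r * s = 0 := le_antisymm ht (le_trans hα h1)
    have hs : s = 0 := by
      rcases mul_eq_zero.mp ht0 with h | h
      · exact absurd h hr0.ne'
      · exact h
    have hα0 : α = 0 := le_antisymm (by rw [ht0] at h1; exact h1) hα
    rw [hs, hα0]
  · -- facet (r*a) ⊆ Hminus, facet (r*b) ⊆ Hplus
    right
    refine ⟨fun x hx => ?_, hB⟩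
    have hx1 : (r • x : EuclideanSpace ℝ (Fin ℓ)) ∈ facet ℓ i (r * a) := by
      rw [hfa]; exact ⟨x, hx, rfl⟩
    have h1 : (inner ℝ (r • x : EuclideanSpace ℝ (Fin ℓ)) u : ℝ) ≤ α := hA hx1
    rw [real_inner_smul_left] at h1
    show (inner ℝ x u : ℝ) ≤ α
    nlinarith

/-- For `r > 1`: `L(r·a, r·b) = r·L(a,b)` and `L(a, r·b) ≥ r·L(a,b)`. -/
theorem stmt15 (ℓ : ℕ) (hℓ : 1 ≤ ℓ) (γ : ℝ) (hγ : 0 < γ)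
    (θ : Measure (unitSphere ℓ)) [IsProbabilityMeasure θ]
    (a b r : ℝ) (ha : 0 < a) (hab : a < b) (hr : 1 < r) :
    Lmin ℓ γ θ (r * a) (r * b) = ENNReal.ofReal r * Lmin ℓ γ θ a b ∧
    ENNReal.ofReal r * Lmin ℓ γ θ a b ≤ Lmin ℓ γ θ a (r * b) := by
  have hr0 : 0 < r := lt_trans one_pos hr
  haveI : Nonempty (Fin ℓ ⊕ Fin ℓ) := ⟨Sum.inl ⟨0, hℓ⟩⟩
  have key : ∀ i : Fin ℓ ⊕ Fin ℓ,
      hypMeasure ℓ γ θ (Ghat ℓ i (r * a) (r * b))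
        = ENNReal.ofReal r * hypMeasure ℓ γ θ (Ghat ℓ i a b) := fun i => by
    rw [Ghat_preimage ℓ i hr0 a b, hypMeasure_scale ℓ γ θ hr0]
  have h1 : Lmin ℓ γ θ (r * a) (r * b) = ENNReal.ofReal r * Lmin ℓ γ θ a b := by
    unfold Lmin
    rw [ENNReal.mul_iInf_of_ne (by simp [hr0]) ENNReal.ofReal_ne_top]
    exact iInf_congr key
  refine ⟨h1, ?_⟩
  rw [← h1]
  exact le_iInf fun i => iInf_le_of_le i (measure_mono (Ghat_mono_subset ℓ i ha hab hr))
end
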